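/- arXiv:1204.0647 — 3 statements merged into one kernel-verified Lean document; each statement's English description precedes it below -/
import Mathlib

section
/- Let G be a graph of maximum degree Δ₁ and let H be a graph of order n₂. Then Δ₁ + n₂ + 1 ≤ χ_{≤2}(G⊙H) ≤ χ_{≤2}(G) + n₂. -/
open SimpleGraph

/-- The corona product `G ⊙ H`: one copy of `G` together with one copy of `H`
for each vertex of `G`, where the `i`-th vertex of `G` is joined by an edge to
every vertex of the `i`-th copy of `H`. -/
def corona {α β : Type*} (G : SimpleGraph α) (H : SimpleGraph β) :
    SimpleGraph (α ⊕ α × β) where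
  Adj x y :=
    match x, y with
    | Sum.inl u, Sum.inl v => G.Adj u v
    | Sum.inl u, Sum.inr q => u = q.1
    | Sum.inr p, Sum.inl v => p.1 = v
    | Sum.inr p, Sum.inr q => p.1 = q.1 ∧ H.Adj p.2 q.2
  symm := ⟨by
    rintro (u | p) (v | q) h
    · exact h.symm
    · exact h.symm
    · exact h.symm
    · exact ⟨h.1.symm, h.2.symm⟩⟩
  loopless := ⟨by
    rintro (u | p) h
    · exact G.irrefl h
    · exact H.irrefl h.2⟩

def DistKColorable {α : Type*} (G : SimpleGraph α) (k n : ℕ) : Prop :=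
  ∃ c : α → Fin n, ∀ u v : α, u ≠ v → (∃ w : G.Walk u v, w.length ≤ k) → c u ≠ c v

noncomputable def distChromaticNumber {α : Type*} (G : SimpleGraph α) (k : ℕ) : ℕ :=
  sInf {n | DistKColorable G k n}

lemma colorable_card {γ : Type*} [Fintype γ] (G : SimpleGraph γ) (k : ℕ) :
    DistKColorable G k (Fintype.card γ) :=
  ⟨Fintype.equivFin γ, fun _ _ huv _ h => huv ((Fintype.equivFin γ).injective h)⟩

lemma corona_lower {α β : Type*} [Fintype α] [Fintype β] [Nonempty α]
    (G : SimpleGraph α) [DecidableRel G.Adj] (H : SimpleGraph β) {n : ℕ}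
    (hn : DistKColorable (corona G H) 2 n) :
    G.maxDegree + Fintype.card β + 1 ≤ n := by
  obtain ⟨u, hu⟩ := G.exists_maximal_degree_vertex
  obtain ⟨c, hc⟩ := hn
  set g : Unit ⊕ (↥(G.neighborSet u) ⊕ β) → α ⊕ α × β := fun t =>
    match t with
    | Sum.inl _ => Sum.inl u
    | Sum.inr (Sum.inl v) => Sum.inl v.1
    | Sum.inr (Sum.inr b) => Sum.inr (u, b) with hg
  have walk1 : ∀ {x y : α ⊕ α × β}, (corona G H).Adj x y →
      ∃ w : (corona G H).Walk x y, w.length ≤ 2 :=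
    fun h => ⟨.cons h .nil, by simp⟩
  have walk2 : ∀ {x y z : α ⊕ α × β}, (corona G H).Adj x z → (corona G H).Adj z y →
      ∃ w : (corona G H).Walk x y, w.length ≤ 2 :=
    fun h1 h2 => ⟨.cons h1 (.cons h2 .nil), by simp⟩
  have key : Function.Injective (c ∘ g) := by
    have adj1 : ∀ v : ↥(G.neighborSet u), (corona G H).Adj (Sum.inl u) (Sum.inl v.1) :=
      fun v => v.2
    have adj2 : ∀ b : β, (corona G H).Adj (Sum.inl u) (Sum.inr (u, b)) := fun b => rfl
    rintro (⟨⟩ | (v | b)) (⟨⟩ | (v' | b')) heq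
    · rfl
    · exact absurd heq (hc _ _ (by simp [hg, (G.ne_of_adj v'.2)]) (walk1 (adj1 v')))
    · exact absurd heq (hc _ _ (by simp [hg]) (walk1 (adj2 b')))
    · exact absurd heq (hc _ _ (by simp [hg, (G.ne_of_adj v.2).symm]) (walk1 (adj1 v).symm))
    · by_cases hvv : v = v'
      · rw [hvv]
      · exact absurd heq (hc _ _ (by simp [hg, Subtype.coe_injective.ne hvv])
          (walk2 (adj1 v).symm (adj1 v')))
    · exact absurd heq (hc _ _ (by simp [hg]) (walk2 (adj1 v).symm (adj2 b')))
    · exact absurd heq (hc _ _ (by simp [hg]) (walk1 (adj2 b).symm))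
    · exact absurd heq (hc _ _ (by simp [hg]) (walk2 (adj2 b).symm (adj1 v')))
    · by_cases hbb : b = b'
      · rw [hbb]
      · exact absurd heq (hc _ _ (by simp [hg, hbb]) (walk2 (adj2 b).symm (adj2 b')))
  have hcard := Fintype.card_le_of_injective _ key
  simp only [Fintype.card_sum, Fintype.card_unit, Fintype.card_fin,
    G.card_neighborSet_eq_degree] at hcard
  omega

lemma corona_upper {α β : Type*} [Fintype β]
    (G : SimpleGraph α) (H : SimpleGraph β) {m : ℕ} (hm : DistKColorable G 2 m) :
    DistKColorable (corona G H) 2 (m + Fintype.card β) := by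
  obtain ⟨c, hc⟩ := hm
  refine ⟨fun x => match x with
    | Sum.inl v => (c v).castAdd (Fintype.card β)
    | Sum.inr p => (Fintype.equivFin β p.2).natAdd m, ?_⟩
  rintro (v | p) (v' | p') hne ⟨w, hw⟩ heq
  · -- inl / inl
    have hvv' : v ≠ v' := fun h => hne (by rw [h])
    have hG : ∃ wg : G.Walk v v', wg.length ≤ 2 := by
      cases w with
      | nil => exact absurd rfl hne
      | cons h p =>
        rename_i x
        cases p with
        | nil => exact ⟨.cons (show G.Adj v v' from h) .nil, by simp⟩
        | cons h' p' =>
          cases p' with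
          | nil =>
            cases x with
            | inl w0 => exact ⟨.cons (show G.Adj v w0 from h) (.cons (show G.Adj w0 v' from h') .nil), by simp⟩
            | inr q => exact absurd (h.trans h') hvv'
          | cons h'' p'' => simp [SimpleGraph.Walk.length_cons] at hw
    exact hc v v' hvv' hG (by
      have := congrArg Fin.val heq
      simpa [Fin.ext_iff] using this)
  · have := congrArg Fin.val heq
    simp at this
    omega
  · have := congrArg Fin.val heq
    simp at this
    omega
  · -- inr / inr
    have h1 : p.1 = p'.1 := by
      cases w with
      | nil => exact absurd rfl hne
      | cons h p0 =>
        rename_i x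
        cases p0 with
        | nil => exact h.1
        | cons h' p1 =>
          cases p1 with
          | nil =>
            cases x with
            | inl w0 => exact h.trans h'
            | inr q => exact h.1.trans h'.1
          | cons h'' p'' => simp [SimpleGraph.Walk.length_cons] at hw
    have h2 : p.2 = p'.2 := by
      have := congrArg Fin.val heq
      simp at this
      exact (Fintype.equivFin β).injective (by omega)
    exact hne (congrArg Sum.inr (Prod.ext h1 h2))

/-- Let `G` be a graph of maximum degree `Δ₁` and `H` a graph of order `n₂`.
Then `Δ₁ + n₂ + 1 ≤ χ_{≤2}(G ⊙ H) ≤ χ_{≤2}(G) + n₂`. -/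
theorem stmt_2 {α β : Type*} [Fintype α] [Fintype β] [Nonempty α]
    (G : SimpleGraph α) [DecidableRel G.Adj] (H : SimpleGraph β) :
    G.maxDegree + Fintype.card β + 1 ≤ distChromaticNumber (corona G H) 2 ∧
      distChromaticNumber (corona G H) 2 ≤ distChromaticNumber G 2 + Fintype.card β := by
  constructor
  · exact corona_lower G H (Nat.sInf_mem (s := {n | DistKColorable (corona G H) 2 n}) ⟨_, colorable_card (corona G H) 2⟩)
  · exact Nat.sInf_le (corona_upper G H (Nat.sInf_mem (s := {n | DistKColorable G 2 n}) ⟨_, colorable_card G 2⟩))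
end

section
/- Let H be a graph of order n₂ and let T = (V,E) be a tree. Let Δ_{ij}(T) = max{δ(v_l) + δ(v_r) : v_l, v_r ∈ V, v_l adjacent to v_r} be the maximum sum of degrees over adjacent pairs of vertices of T. Then χ_{≤3}(T⊙H) = 2n₂ + Δ_{ij}(T). -/
open Finset


open SimpleGraph

section Greedy

variable {α : Type*} [Fintype α] (R : α → α → Prop) [DecidableRel R]
  (ρ : α → ℕ) (n : ℕ)

/-- Greedy coloring along the order given by `ρ`. -/
noncomputable def greedyCol
    (hb : ∀ v : α, ((Finset.univ.filter (fun w => R v w ∧ ρ w < ρ v)).card < n)) :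
    α → Fin n := fun v =>
  ((Finset.univ : Finset (Fin n)) \
      ((Finset.univ.filter (fun w => R v w ∧ ρ w < ρ v)).attach.image
        (fun w => greedyCol hb w.1))).min'
    (by
      rw [← Finset.card_pos]
      have h1 : ((Finset.univ.filter (fun w => R v w ∧ ρ w < ρ v)).attach.image
          (fun w : {x // x ∈ Finset.univ.filter (fun w => R v w ∧ ρ w < ρ v)} =>
            greedyCol hb w.1)).card
          ≤ (Finset.univ.filter (fun w => R v w ∧ ρ w < ρ v)).card := by
        refine Finset.card_image_le.trans ?_
        simp
      have h2 := hb v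
      have h3 := Finset.card_sdiff_of_subset (Finset.subset_univ
        ((Finset.univ.filter (fun w => R v w ∧ ρ w < ρ v)).attach.image
          (fun w => greedyCol hb w.1)))
      rw [h3]
      have : (Finset.univ : Finset (Fin n)).card = n := Finset.card_univ.trans (Fintype.card_fin n)
      omega)
termination_by v => ρ v
decreasing_by all_goals exact (Finset.mem_filter.mp w.2).2.2

theorem greedyCol_ne
    (hb : ∀ v : α, ((Finset.univ.filter (fun w => R v w ∧ ρ w < ρ v)).card < n))
    (hsym : ∀ u v, R u v → R v u) (hinj : Function.Injective ρ)
    (hirr : ∀ v, ¬ R v v) :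
    ∀ u v, R u v → greedyCol R ρ n hb u ≠ greedyCol R ρ n hb v := by
  have key : ∀ u v, R u v → ρ v < ρ u → greedyCol R ρ n hb u ≠ greedyCol R ρ n hb v := by
    intro u v hR hlt
    have hmem : greedyCol R ρ n hb u ∈ (Finset.univ : Finset (Fin n)) \
        ((Finset.univ.filter (fun w => R u w ∧ ρ w < ρ u)).attach.image
          (fun w => greedyCol R ρ n hb w.1)) := by
      rw [greedyCol]
      exact Finset.min'_mem _ _
    rw [Finset.mem_sdiff] at hmem
    intro hEq
    apply hmem.2
    rw [Finset.mem_image]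
    refine ⟨⟨v, ?_⟩, Finset.mem_attach _ _, hEq.symm⟩
    simp only [Finset.mem_filter, Finset.mem_univ, true_and]
    exact ⟨hR, hlt⟩
  intro u v hR
  rcases lt_trichotomy (ρ u) (ρ v) with h | h | h
  · exact (key v u (hsym _ _ hR) h).symm
  · have := hinj h
    subst this
    exact absurd hR (hirr u)
  · exact key u v hR h

end Greedy

section TreeLemmas

variable {V : Type*} [DecidableEq V] (T : SimpleGraph V) (hT : T.IsTree) (r : V)
include hT

/-- On a shortest walk, distances to the endpoints add up. -/
lemma dist_support_add {a b x : V} (W : T.Walk a b) (hW : W.length = T.dist a b)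
    (hx : x ∈ W.support) : T.dist a x + T.dist x b = T.dist a b := by
  obtain ⟨q, s, rfl⟩ := SimpleGraph.Walk.mem_support_iff_exists_append.mp hx
  have h1 : T.dist a x ≤ q.length := SimpleGraph.dist_le q
  have h2 : T.dist x b ≤ s.length := SimpleGraph.dist_le s
  have h3 := hT.isConnected.dist_triangle (u := a) (v := x) (w := b)
  rw [SimpleGraph.Walk.length_append] at hW
  omega

/-- There is a shortest *path* between any two vertices. -/
lemma exists_shortest_path (a b : V) :
    ∃ P : T.Walk a b, P.IsPath ∧ P.length = T.dist a b := by
  obtain ⟨W, hW⟩ := hT.isConnected.exists_walk_length_eq_dist a b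
  refine ⟨W.bypass, W.bypass_isPath, le_antisymm ?_ ?_⟩
  · exact le_trans (SimpleGraph.Walk.length_bypass_le W) (le_of_eq hW)
  · exact SimpleGraph.dist_le _

omit hT in
lemma concat_isPath {a b c : V} (P : T.Walk a b) (hP : P.IsPath) (h : T.Adj b c)
    (hc : c ∉ P.support) : (P.concat h).IsPath := by
  rw [← SimpleGraph.Walk.isPath_reverse_iff, SimpleGraph.Walk.reverse_concat]
  exact Walk.IsPath.cons hP.reverse (by simpa using hc)

/-- Adjacent vertices in a tree have different distances to the root. -/
lemma adj_dist_ne {u v : V} (huv : T.Adj u v) : T.dist r u ≠ T.dist r v := by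
  intro h
  obtain ⟨P, hP, hPl⟩ := exists_shortest_path T hT r u
  have hvP : v ∉ P.support := by
    intro hv
    have := dist_support_add T hT P hPl hv
    have h0 : T.dist v u = 0 := by omega
    have := (hT.isConnected.dist_eq_zero_iff).mp h0
    exact huv.ne this.symm
  have hA : (P.concat huv).IsPath := concat_isPath T P hP huv hvP
  obtain ⟨Q, hQ, hQl⟩ := exists_shortest_path T hT r v
  have := isAcyclic_iff_path_unique.mp hT.IsAcyclic ⟨P.concat huv, hA⟩ ⟨Q, hQ⟩
  have hw : P.concat huv = Q := congrArg Subtype.val this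
  have h1 : (P.concat huv).length = P.length + 1 := SimpleGraph.Walk.length_concat _ _
  rw [hw] at h1
  omega

lemma adj_dist_cases {u v : V} (huv : T.Adj u v) :
    T.dist r v = T.dist r u + 1 ∨ T.dist r u = T.dist r v + 1 := by
  have hne := adj_dist_ne T hT r huv
  have h1 : T.dist r v ≤ T.dist r u + 1 := by
    have := hT.isConnected.dist_triangle (u := r) (v := u) (w := v)
    have h2 : T.dist u v ≤ 1 := SimpleGraph.dist_le (Walk.cons huv Walk.nil)
    omega
  have h2 : T.dist r u ≤ T.dist r v + 1 := by
    have := hT.isConnected.dist_triangle (u := r) (v := v) (w := u)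
    have h2 : T.dist v u ≤ 1 := SimpleGraph.dist_le (Walk.cons huv.symm Walk.nil)
    omega
  omega

/-- Uniqueness of the parent: a vertex has at most one neighbour nearer the root. -/
lemma parent_unique {v w w' : V} (hw : T.Adj w v) (hw' : T.Adj w' v)
    (hd : T.dist r w + 1 = T.dist r v) (hd' : T.dist r w' + 1 = T.dist r v) : w = w' := by
  by_contra hne
  obtain ⟨P, hP, hPl⟩ := exists_shortest_path T hT r w
  obtain ⟨P', hP', hPl'⟩ := exists_shortest_path T hT r w'
  have hvP : v ∉ P.support := by
    intro hv
    have := dist_support_add T hT P hPl hv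
    omega
  have hvP' : v ∉ P'.support := by
    intro hv
    have := dist_support_add T hT P' hPl' hv
    omega
  have hA : (P.concat hw).IsPath := concat_isPath T P hP hw hvP
  have hA' : (P'.concat hw').IsPath := concat_isPath T P' hP' hw' hvP'
  have := isAcyclic_iff_path_unique.mp hT.IsAcyclic ⟨P.concat hw, hA⟩ ⟨P'.concat hw', hA'⟩
  have heq : P.concat hw = P'.concat hw' := congrArg Subtype.val this
  have hmem : w' ∈ (P'.concat hw').support := by
    rw [SimpleGraph.Walk.support_concat]
    exact List.mem_append.mpr (Or.inl (SimpleGraph.Walk.end_mem_support P'))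
  rw [← heq] at hmem
  rw [SimpleGraph.Walk.support_concat] at hmem
  rcases List.mem_append.mp hmem with hmem | hmem
  · have := dist_support_add T hT P hPl hmem
    have h0 : T.dist w' w = 0 := by omega
    exact hne ((hT.isConnected.dist_eq_zero_iff).mp h0).symm
  · simp only [List.mem_singleton] at hmem
    subst hmem
    omega

/-- Every non-root vertex has a parent. -/
lemma exists_parent {v : V} (hv : T.dist r v ≠ 0) :
    ∃ p : V, T.Adj p v ∧ T.dist r p + 1 = T.dist r v := by
  obtain ⟨W, hW⟩ := hT.isConnected.exists_walk_length_eq_dist r v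
  rcases hrev : W.reverse with _ | ⟨hadj, q⟩
  · exfalso
    apply hv
    have : W.reverse.length = 0 := by rw [hrev]; rfl
    rw [SimpleGraph.Walk.length_reverse] at this
    omega
  · rename_i x
    refine ⟨x, hadj.symm, ?_⟩
    have hlen : q.length + 1 = T.dist r v := by
      have : W.reverse.length = q.length + 1 := by rw [hrev]; rfl
      rw [SimpleGraph.Walk.length_reverse] at this
      omega
    have h1 : T.dist r x ≤ q.length := by
      have := SimpleGraph.dist_le q.reverse
      rwa [SimpleGraph.Walk.length_reverse] at this
    have h2 : T.dist r v ≤ T.dist r x + 1 := by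
      have := hT.isConnected.dist_triangle (u := r) (v := x) (w := v)
      have h3 : T.dist x v ≤ 1 := SimpleGraph.dist_le (Walk.cons hadj.symm Walk.nil)
      omega
    omega

end TreeLemmas

section Claim

variable {V : Type*} [DecidableEq V] (T : SimpleGraph V) (hT : T.IsTree) (r : V)
  [Fintype V] [DecidableRel T.Adj]
include hT

/-- Key structural claim: any vertex `w ≠ v` with `d w ≤ d v` and `dist v w ≤ 3`
is the parent `p` of `v`, a neighbour of `p`, or a neighbour of the parent of `p`. -/
lemma claimC {v p w : V} (hpv : T.Adj p v) (hdp : T.dist r p + 1 = T.dist r v)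
    (hw : w ≠ v) (hdw : T.dist r w ≤ T.dist r v) (h3 : T.dist v w ≤ 3) :
    w = p ∨ T.Adj p w ∨ (∃ g, T.Adj g p ∧ T.dist r g + 1 = T.dist r p ∧ T.Adj g w) := by
  have hne0 : T.dist v w ≠ 0 := by
    intro h0
    exact hw ((hT.isConnected.dist_eq_zero_iff).mp h0).symm
  obtain ⟨W, hW⟩ := hT.isConnected.exists_walk_length_eq_dist v w
  -- peel off up to three edges
  cases W with
  | nil => exact absurd rfl hw
  | cons h1 W1 =>
    rename_i x
    cases W1 with
    | nil =>
      -- dist v w = 1, x = w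
      have hx : T.Adj v w := h1
      rcases adj_dist_cases T hT r hx with hc | hc
      · omega
      · exact Or.inl (parent_unique T hT r hx.symm hpv (by omega) hdp)
    | cons h2 W2 =>
      rename_i y
      cases W2 with
      | nil =>
        -- dist v w = 2 : v ~ x ~ w
        have hlen : T.dist v w = 2 := by simp at hW; omega
        rcases adj_dist_cases T hT r h1 with hc1 | hc1
        · -- x deeper than v
          rcases adj_dist_cases T hT r h2 with hc2 | hc2
          · omega
          · -- w at depth of v, w and v both parents of x
            have : v = w := parent_unique T hT r h1 h2.symm (by omega) (by omega)
            exact absurd this.symm hw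
        · -- x = p
          have hxp : x = p := parent_unique T hT r h1.symm hpv (by omega) hdp
          subst hxp
          exact Or.inr (Or.inl h2)
      | cons h3'' W3 =>
        rename_i z
        have hW3 : W3.length = 0 := by
          have := SimpleGraph.dist_le W3
          simp at hW
          omega
        have hzw : z = w := SimpleGraph.Walk.eq_of_length_eq_zero hW3
        have h3' : T.Adj y w := hzw ▸ h3''
        have hlen : T.dist v w = 3 := by simp at hW; omega
        rcases adj_dist_cases T hT r h1 with hc1 | hc1
        · -- x deeper
          rcases adj_dist_cases T hT r h2 with hc2 | hc2
          · -- y deeper still: w too deep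
            rcases adj_dist_cases T hT r h3' with hc3 | hc3 <;> omega
          · -- y at depth of v: y = v
            have hyv : y = v := parent_unique T hT r h2.symm h1 (by omega) (by omega)
            have hvw : T.Adj v w := hyv ▸ h3'
            have : T.dist v w ≤ 1 := SimpleGraph.dist_le (Walk.cons hvw Walk.nil)
            omega
        · -- x = p
          have hxp : x = p := parent_unique T hT r h1.symm hpv (by omega) hdp
          subst hxp
          rcases adj_dist_cases T hT r h2 with hc2 | hc2
          · -- y at depth d v : then w at depth d v - 1 hence w = p
            rcases adj_dist_cases T hT r h3' with hc3 | hc3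
            · omega
            · exact Or.inl (parent_unique T hT r h3'.symm h2 (by omega) (by omega))
          · -- y is the grandparent
            exact Or.inr (Or.inr ⟨y, h2.symm, by omega, h3'⟩)

/-- Degrees are positive. -/
lemma deg_pos {u v : V} (huv : T.Adj u v) : 0 < T.degree u :=
  T.degree_pos_iff_exists_adj u |>.mpr ⟨v, huv⟩

end Claim

section CardBound

variable {V : Type*} [DecidableEq V] (T : SimpleGraph V) (hT : T.IsTree) (r : V)
  [Fintype V] [DecidableRel T.Adj]
include hT

lemma earlier_card_lt (Δij : ℕ)
    (hΔ : IsGreatest {d : ℕ | ∃ u v : V, T.Adj u v ∧ d = T.degree u + T.degree v} Δij)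
    (N : ℕ) (idx : V → ℕ) (hidx : ∀ v, idx v < N) (v : V)
    [DecidablePred (fun w => (w ≠ v ∧ T.dist v w ≤ 3) ∧
        T.dist r w * N + idx w < T.dist r v * N + idx v)] :
    (Finset.univ.filter (fun w => (w ≠ v ∧ T.dist v w ≤ 3) ∧
        T.dist r w * N + idx w < T.dist r v * N + idx v)).card < Δij := by
  obtain ⟨u0, v0, hadj0, heq0⟩ := hΔ.1
  have hΔ2 : 2 ≤ Δij := by
    have h1 := deg_pos T hT hadj0
    have h2 := deg_pos T hT hadj0.symm
    omega
  -- the "earlier" relation bounds depth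
  have depth_le : ∀ w : V, T.dist r w * N + idx w < T.dist r v * N + idx v →
      T.dist r w ≤ T.dist r v := by
    intro w hlt
    by_contra hgt
    push_neg at hgt
    have : (T.dist r v + 1) * N ≤ T.dist r w * N := Nat.mul_le_mul_right N (by omega)
    have := hidx v
    have := hidx w
    nlinarith
  by_cases hvr : T.dist r v = 0
  · have hempty : (Finset.univ.filter (fun w => (w ≠ v ∧ T.dist v w ≤ 3) ∧
        T.dist r w * N + idx w < T.dist r v * N + idx v)) = ∅ := by
      apply Finset.eq_empty_of_forall_notMem
      intro w hw
      rw [Finset.mem_filter] at hw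
      obtain ⟨-, ⟨hne, -⟩, hlt⟩ := hw
      have hdw : T.dist r w ≤ T.dist r v := depth_le w hlt
      have hw0 : T.dist r w = 0 := by omega
      have h1 : r = w := (hT.isConnected.dist_eq_zero_iff).mp hw0
      have h2 : r = v := (hT.isConnected.dist_eq_zero_iff).mp hvr
      exact hne (h1 ▸ h2)
    rw [hempty]
    simp
    omega
  · obtain ⟨p, hpv, hdp⟩ := exists_parent T hT r hvr
    have hvNp : v ∈ T.neighborFinset p := (T.mem_neighborFinset p v).mpr hpv
    by_cases hpr : T.dist r p = 0
    · -- p is the root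
      have hsub : (Finset.univ.filter (fun w => (w ≠ v ∧ T.dist v w ≤ 3) ∧
          T.dist r w * N + idx w < T.dist r v * N + idx v)) ⊆
          (insert p (T.neighborFinset p)).erase v := by
        intro w hw
        rw [Finset.mem_filter] at hw
        obtain ⟨-, ⟨hne, hd3⟩, hlt⟩ := hw
        rw [Finset.mem_erase]
        refine ⟨hne, ?_⟩
        rcases claimC T hT r hpv hdp hne (depth_le w hlt) hd3 with h | h | ⟨g, hgp, hdg, hgw⟩
        · rw [h]; exact Finset.mem_insert_self p _
        · exact Finset.mem_insert_of_mem ((T.mem_neighborFinset p w).mpr h)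
        · omega
      have hcard := Finset.card_le_card hsub
      have h1 : ((insert p (T.neighborFinset p)).erase v).card =
          (insert p (T.neighborFinset p)).card - 1 :=
        Finset.card_erase_of_mem (Finset.mem_insert_of_mem hvNp)
      have h2 : (insert p (T.neighborFinset p)).card ≤ T.degree p + 1 := by
        have := Finset.card_insert_le p (T.neighborFinset p)
        rw [T.card_neighborFinset_eq_degree] at this
        omega
      have h3 : T.degree p + T.degree v ≤ Δij := hΔ.2 ⟨p, v, hpv, rfl⟩
      have h4 : 0 < T.degree v := deg_pos T hT hpv.symm
      omega
    · -- p has a parent g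
      obtain ⟨g, hgp, hdg⟩ := exists_parent T hT r hpr
      have hsub : (Finset.univ.filter (fun w => (w ≠ v ∧ T.dist v w ≤ 3) ∧
          T.dist r w * N + idx w < T.dist r v * N + idx v)) ⊆
          (T.neighborFinset p ∪ T.neighborFinset g).erase v := by
        intro w hw
        rw [Finset.mem_filter] at hw
        obtain ⟨-, ⟨hne, hd3⟩, hlt⟩ := hw
        rw [Finset.mem_erase]
        refine ⟨hne, Finset.mem_union.mpr ?_⟩
        rcases claimC T hT r hpv hdp hne (depth_le w hlt) hd3 with h | h | ⟨g', hgp', hdg', hgw⟩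
        · right
          rw [T.mem_neighborFinset]
          exact h ▸ hgp
        · left
          exact (T.mem_neighborFinset p w).mpr h
        · right
          have : g' = g := parent_unique T hT r hgp' hgp hdg' hdg
          rw [T.mem_neighborFinset]
          exact this ▸ hgw
      have hcard := Finset.card_le_card hsub
      have h1 : ((T.neighborFinset p ∪ T.neighborFinset g).erase v).card =
          (T.neighborFinset p ∪ T.neighborFinset g).card - 1 :=
        Finset.card_erase_of_mem (Finset.mem_union_left _ hvNp)
      have h2 : (T.neighborFinset p ∪ T.neighborFinset g).card ≤ T.degree p + T.degree g := by
        have := Finset.card_union_le (T.neighborFinset p) (T.neighborFinset g)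
        rw [T.card_neighborFinset_eq_degree, T.card_neighborFinset_eq_degree] at this
        exact this
      have h3 : T.degree g + T.degree p ≤ Δij := hΔ.2 ⟨g, p, hgp, rfl⟩
      omega

end CardBound
section CoronaLemmas

variable {α β : Type*} {G : SimpleGraph α} {H : SimpleGraph β}

/-- Projection to the base graph. -/
def projC : α ⊕ α × β → α := Sum.elim id Prod.fst

/-- Extra cost: vertices in a copy of `H` are "one step away" from the base. -/
def epsC : α ⊕ α × β → ℕ := Sum.elim (fun _ => 0) (fun _ => 1)

lemma corona_adj_inl_inl {u v : α} (h : G.Adj u v) :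
    (corona G H).Adj (Sum.inl u) (Sum.inl v) := h

lemma corona_adj_inl_inr {u : α} {b : β} :
    (corona G H).Adj (Sum.inl u) (Sum.inr (u, b)) := rfl

lemma corona_adj_inr_inl {u : α} {b : β} :
    (corona G H).Adj (Sum.inr (u, b)) (Sum.inl u) := rfl

/-- A walk in the corona projects to a walk in the base graph, losing one step
at each endpoint lying in a copy of `H`. -/
lemma corona_walk_project : ∀ {x y : α ⊕ α × β} (w : (corona G H).Walk x y),
    projC x ≠ projC y →
    ∃ tw : G.Walk (projC x) (projC y), tw.length + epsC x + epsC y ≤ w.length := by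
  intro x y w
  induction w with
  | nil => intro h; exact absurd rfl h
  | @cons a b c hab w' ih =>
    intro hac
    cases a with
    | inl u =>
      cases b with
      | inl u' =>
        have hadj : G.Adj u u' := hab
        by_cases hbc : projC (Sum.inl u' : α ⊕ α × β) = projC c
        · refine ⟨(Walk.cons hadj Walk.nil).copy rfl hbc, ?_⟩
          erw [SimpleGraph.Walk.length_copy]
          simp only [SimpleGraph.Walk.length_copy, SimpleGraph.Walk.length_cons,
            SimpleGraph.Walk.length_nil]
          cases c with
          | inl v => simp [epsC]
          | inr q =>
            have hne : (Sum.inl u' : α ⊕ α × β) ≠ Sum.inr q := by simp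
            have : w'.length ≠ 0 := fun h0 =>
              hne (SimpleGraph.Walk.eq_of_length_eq_zero h0)
            simp only [epsC, Sum.elim_inl, Sum.elim_inr]
            simp [SimpleGraph.Walk.length_cons]
            omega
        · obtain ⟨tw, htw⟩ := ih hbc
          refine ⟨Walk.cons hadj tw, ?_⟩
          show tw.length + 1 + epsC (Sum.inl u : α ⊕ α × β) + epsC c ≤ w'.length + 1
          simp only [epsC, Sum.elim_inl] at htw ⊢
          omega
      | inr q =>
        have heq : u = q.1 := hab
        have hbc : projC (Sum.inr q : α ⊕ α × β) ≠ projC c := by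
          simpa [projC, ← heq] using hac
        obtain ⟨tw, htw⟩ := ih hbc
        refine ⟨tw.copy (by simp [projC, heq]) rfl, ?_⟩
        erw [SimpleGraph.Walk.length_copy]
        simp only [epsC, Sum.elim_inl, Sum.elim_inr] at htw ⊢
        simp [SimpleGraph.Walk.length_cons]
        omega
    | inr p =>
      cases b with
      | inl u' =>
        have heq : p.1 = u' := hab
        have hbc : projC (Sum.inl u' : α ⊕ α × β) ≠ projC c := by
          simpa [projC, ← heq] using hac
        obtain ⟨tw, htw⟩ := ih hbc
        refine ⟨tw.copy (by simp [projC, heq]) rfl, ?_⟩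
        erw [SimpleGraph.Walk.length_copy]
        simp only [epsC, Sum.elim_inl, Sum.elim_inr] at htw ⊢
        simp [SimpleGraph.Walk.length_cons]
        omega
      | inr q =>
        have heq : p.1 = q.1 := hab.1
        have hbc : projC (Sum.inr q : α ⊕ α × β) ≠ projC c := by
          simpa [projC, ← heq] using hac
        obtain ⟨tw, htw⟩ := ih hbc
        refine ⟨tw.copy (by simp [projC, heq]) rfl, ?_⟩
        erw [SimpleGraph.Walk.length_copy]
        simp only [epsC, Sum.elim_inr] at htw ⊢
        simp [SimpleGraph.Walk.length_cons]
        omega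

/-- A walk of length ≤ 1 between distinct vertices gives adjacency. -/
lemma adj_of_short_walk {G : SimpleGraph α} {a b : α} (hne : a ≠ b)
    (w : G.Walk a b) (hl : w.length ≤ 1) : G.Adj a b := by
  cases w with
  | nil => exact absurd rfl hne
  | cons h w' =>
    have : w'.length = 0 := by
      simp only [SimpleGraph.Walk.length_cons] at hl
      omega
    have heq := SimpleGraph.Walk.eq_of_length_eq_zero this
    exact heq ▸ h

end CoronaLemmas

/-- In a tree, two adjacent vertices have disjoint neighbourhoods. -/
lemma tree_neighbor_disjoint {V : Type*} [Fintype V] {T : SimpleGraph V} [DecidableRel T.Adj]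
    (hT : T.IsTree) {u v : V} (huv : T.Adj u v) :
    Disjoint (T.neighborFinset u) (T.neighborFinset v) := by
  rw [Finset.disjoint_left]
  intro x hxu hxv
  rw [T.mem_neighborFinset] at hxu hxv
  have hP1 : (Walk.cons hxu Walk.nil : T.Walk u x).IsPath := by
    simp [SimpleGraph.Walk.isPath_def, hxu.ne]
  have hP2 : (Walk.cons huv (Walk.cons hxv Walk.nil) : T.Walk u x).IsPath := by
    simp [SimpleGraph.Walk.isPath_def, huv.ne, hxv.ne, hxu.ne]
  have := isAcyclic_iff_path_unique.mp hT.IsAcyclic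
    ⟨Walk.cons hxu Walk.nil, hP1⟩ ⟨Walk.cons huv (Walk.cons hxv Walk.nil), hP2⟩
  have hw : (Walk.cons hxu Walk.nil : T.Walk u x)
      = Walk.cons huv (Walk.cons hxv Walk.nil) := congrArg Subtype.val this
  have := congrArg SimpleGraph.Walk.length hw
  simp at this

/-- Let `H` be a graph of order `n₂` and let `T` be a tree. If
`Δij = max { δ(u) + δ(v) : u, v adjacent vertices of T }`, then
`χ_{≤3}(T ⊙ H) = 2 n₂ + Δij`. -/
theorem stmt_6 {V β : Type*} [Fintype V] [Fintype β]
    (T : SimpleGraph V) [DecidableRel T.Adj] (H : SimpleGraph β)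
    (hT : T.IsTree) (Δij : ℕ)
    (hΔ : IsGreatest {d : ℕ | ∃ u v : V, T.Adj u v ∧ d = T.degree u + T.degree v} Δij) :
    distChromaticNumber (corona T H) 3 = 2 * Fintype.card β + Δij := by
  classical
  obtain ⟨u0, v0, hadj0, hd0⟩ := hΔ.1
  have hΔ2 : 2 ≤ Δij := by
    have h1 := deg_pos T hT hadj0
    have h2 := deg_pos T hT hadj0.symm
    omega
  have hne : Nonempty V := hT.isConnected.nonempty
  set K := Fintype.card β with hK
  obtain ⟨r⟩ := hne
  -- ========== UPPER BOUND : a coloring with 2K + Δij colors ==========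
  have hmem : DistKColorable (corona T H) 3 (2 * K + Δij) := by
    set N := Fintype.card V with hN
    set eV := Fintype.equivFin V with heV
    set eβ := Fintype.equivFin β with heβ
    set idx : V → ℕ := fun v => (eV v : ℕ) with hidxdef
    have hidx : ∀ v, idx v < N := fun v => (eV v).isLt
    -- the tree coloring
    set R : V → V → Prop := fun v w => w ≠ v ∧ T.dist v w ≤ 3 with hR
    set ρ : V → ℕ := fun w => T.dist r w * N + idx w with hρ
    have hb : ∀ v : V, ((Finset.univ.filter (fun w => R v w ∧ ρ w < ρ v)).card < Δij) := by
      intro v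
      have := earlier_card_lt T hT r Δij hΔ N idx hidx v
      convert this using 2
    have hinj : Function.Injective ρ := by
      intro a b hab
      have key : ∀ x y : V, T.dist r x < T.dist r y → ρ x < ρ y := by
        intro x y hxy
        have h1 : (T.dist r x + 1) * N ≤ T.dist r y * N := Nat.mul_le_mul_right N (by omega)
        have := hidx x
        have := hidx y
        simp only [hρ]
        nlinarith
      have hdab : T.dist r a = T.dist r b := by
        rcases lt_trichotomy (T.dist r a) (T.dist r b) with h | h | h
        · exact absurd hab (key a b h).ne
        · exact h
        · exact absurd hab.symm (key b a h).ne
      have : idx a = idx b := by simp only [hρ, hdab] at hab; omega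
      have : eV a = eV b := Fin.ext this
      exact eV.injective this
    have hsym : ∀ u v, R u v → R v u := by
      intro u v huv
      exact ⟨fun h => huv.1 h.symm, by rw [SimpleGraph.dist_comm]; exact huv.2⟩
    have hirr : ∀ v, ¬ R v v := fun v h => h.1 rfl
    set ct := greedyCol R ρ Δij hb with hct
    have hctne : ∀ u v, R u v → ct u ≠ ct v := greedyCol_ne R ρ Δij hb hsym hinj hirr
    -- the full coloring
    set cval : V ⊕ V × β → ℕ :=
      Sum.elim (fun v => 2 * K + (ct v : ℕ))
        (fun p => (T.dist r p.1 % 2) * K + (eβ p.2 : ℕ)) with hcval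
    have hcvlt : ∀ x, cval x < 2 * K + Δij := by
      rintro (v | p)
      · have := (ct v).isLt
        simp only [hcval, Sum.elim_inl]
        omega
      · have h1 : T.dist r p.1 % 2 < 2 := Nat.mod_lt _ (by norm_num)
        have h2 := (eβ p.2).isLt
        have h3 : (T.dist r p.1 % 2) * K ≤ 1 * K := Nat.mul_le_mul_right K (by omega)
        simp only [hcval, Sum.elim_inr]
        omega
    refine ⟨fun x => ⟨cval x, hcvlt x⟩, ?_⟩
    intro x y hxy hw hEq
    obtain ⟨w, hw3⟩ := hw
    have hEq' : cval x = cval y := congrArg Fin.val hEq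
    match x, y with
    | Sum.inl u, Sum.inl v =>
      have huv : u ≠ v := fun h => hxy (by rw [h])
      obtain ⟨tw, htw⟩ := corona_walk_project w (by simpa [projC] using huv)
      have hdist : T.dist u v ≤ 3 := by
        have : T.dist u v ≤ tw.length := SimpleGraph.dist_le tw
        simp only [epsC, Sum.elim_inl] at htw
        omega
      have : ct u ≠ ct v := hctne u v ⟨huv.symm, hdist⟩
      simp only [hcval, Sum.elim_inl] at hEq'
      exact this (Fin.ext (by omega))
    | Sum.inl u, Sum.inr p =>
      have h2 := (eβ p.2).isLt
      have h3 : (T.dist r p.1 % 2) * K ≤ 1 * K :=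
        Nat.mul_le_mul_right K (by have := Nat.mod_lt (T.dist r p.1) (y := 2) (by norm_num); omega)
      simp only [hcval, Sum.elim_inl, Sum.elim_inr] at hEq'
      omega
    | Sum.inr p, Sum.inl u =>
      have h2 := (eβ p.2).isLt
      have h3 : (T.dist r p.1 % 2) * K ≤ 1 * K :=
        Nat.mul_le_mul_right K (by have := Nat.mod_lt (T.dist r p.1) (y := 2) (by norm_num); omega)
      simp only [hcval, Sum.elim_inl, Sum.elim_inr] at hEq'
      omega
    | Sum.inr ⟨a, b⟩, Sum.inr ⟨a', b'⟩ =>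
      simp only [hcval, Sum.elim_inr] at hEq'
      by_cases haa : a = a'
      · subst haa
        have hbb : b ≠ b' := by
          intro h
          exact hxy (by rw [h])
        have : (eβ b : ℕ) ≠ (eβ b' : ℕ) := by
          intro h
          exact hbb (eβ.injective (Fin.ext h))
        omega
      · obtain ⟨tw, htw⟩ := corona_walk_project w (by simpa [projC] using haa)
        have htl : tw.length ≤ 1 := by
          simp only [epsC, Sum.elim_inr] at htw
          omega
        have hadj : T.Adj a a' := adj_of_short_walk (by simpa [projC] using haa) tw htl
        have hpar := adj_dist_cases T hT r hadj
        have h1 := (eβ b).isLt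
        have h2 := (eβ b').isLt
        have hmodne : T.dist r a % 2 ≠ T.dist r a' % 2 := by omega
        have hm1 : T.dist r a % 2 < 2 := Nat.mod_lt _ (by norm_num)
        have hm2 : T.dist r a' % 2 < 2 := Nat.mod_lt _ (by norm_num)
        rcases (by omega : T.dist r a % 2 = 0 ∨ T.dist r a % 2 = 1) with h0 | h0 <;>
          rcases (by omega : T.dist r a' % 2 = 0 ∨ T.dist r a' % 2 = 1) with h0' | h0' <;>
            rw [h0, h0'] at hEq' <;> simp at hEq' <;> omega
  -- ========== LOWER BOUND ==========
  have hlow : ∀ n, DistKColorable (corona T H) 3 n → 2 * K + Δij ≤ n := by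
    intro n hn
    obtain ⟨c, hc⟩ := hn
    set A : Finset V := T.neighborFinset u0 ∪ T.neighborFinset v0 with hA
    set S : Finset (V ⊕ V × β) :=
      A.image Sum.inl ∪ ((Finset.univ : Finset β).image fun b => Sum.inr (u0, b))
        ∪ ((Finset.univ : Finset β).image fun b => Sum.inr (v0, b)) with hS
    -- every element of S is one step away from inl u0 or inl v0
    have hstep : ∀ x ∈ S, ∃ z, (z = u0 ∨ z = v0) ∧
        ∃ w : (corona T H).Walk x (Sum.inl z), w.length = 1 := by
      intro x hx
      simp only [hS, hA, Finset.mem_union, Finset.mem_image, Finset.mem_univ, true_and,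
        SimpleGraph.mem_neighborFinset] at hx
      rcases hx with (⟨a, ha, rfl⟩ | ⟨b, rfl⟩) | ⟨b, rfl⟩
      · rcases ha with ha | ha
        · exact ⟨u0, Or.inl rfl,
            Walk.cons (corona_adj_inl_inl ha.symm) Walk.nil, rfl⟩
        · exact ⟨v0, Or.inr rfl,
            Walk.cons (corona_adj_inl_inl ha.symm) Walk.nil, rfl⟩
      · exact ⟨u0, Or.inl rfl, Walk.cons corona_adj_inr_inl Walk.nil, rfl⟩
      · exact ⟨v0, Or.inr rfl, Walk.cons corona_adj_inr_inl Walk.nil, rfl⟩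
    -- any two elements of S are joined by a walk of length ≤ 3
    have hpair : ∀ x ∈ S, ∀ y ∈ S, x ≠ y →
        ∃ w : (corona T H).Walk x y, w.length ≤ 3 := by
      intro x hx y hy hxy
      obtain ⟨z1, hz1, w1, hl1⟩ := hstep x hx
      obtain ⟨z2, hz2, w2, hl2⟩ := hstep y hy
      by_cases hzz : z1 = z2
      · subst hzz
        refine ⟨w1.append w2.reverse, ?_⟩
        rw [SimpleGraph.Walk.length_append, SimpleGraph.Walk.length_reverse]
        omega
      · have hadj : (corona T H).Adj (Sum.inl z1) (Sum.inl z2) := by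
          rcases hz1 with rfl | rfl <;> rcases hz2 with rfl | rfl
          · exact absurd rfl hzz
          · exact corona_adj_inl_inl hadj0
          · exact corona_adj_inl_inl hadj0.symm
          · exact absurd rfl hzz
        refine ⟨w1.append (Walk.cons hadj w2.reverse), ?_⟩
        rw [SimpleGraph.Walk.length_append, SimpleGraph.Walk.length_cons,
          SimpleGraph.Walk.length_reverse]
        omega
    -- c is injective on S
    have hinjS : Set.InjOn c S := by
      intro x hx y hy hcxy
      by_contra hxy
      obtain ⟨w, hw⟩ := hpair x hx y hy hxy
      exact hc x y hxy ⟨w, hw⟩ hcxy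
    have hcard_le : S.card ≤ n := by
      have := Finset.card_le_card_of_injOn c (fun x _ => Finset.mem_univ (c x)) hinjS
      simpa using this
    -- compute the cardinality of S
    have hdisj0 : Disjoint (T.neighborFinset u0) (T.neighborFinset v0) :=
      tree_neighbor_disjoint hT hadj0
    have hcardA : A.card = Δij := by
      rw [hA, Finset.card_union_of_disjoint hdisj0,
        T.card_neighborFinset_eq_degree, T.card_neighborFinset_eq_degree]
      omega
    have hd1 : Disjoint (A.image (Sum.inl : V → V ⊕ V × β))
        ((Finset.univ : Finset β).image fun b => Sum.inr (u0, b)) := by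
      rw [Finset.disjoint_left]
      rintro x hx1 hx2
      simp only [Finset.mem_image, Finset.mem_univ, true_and] at hx1 hx2
      obtain ⟨a, -, rfl⟩ := hx1
      obtain ⟨b, hb⟩ := hx2
      simp at hb
    have hd2 : Disjoint (A.image (Sum.inl : V → V ⊕ V × β) ∪
        ((Finset.univ : Finset β).image fun b => Sum.inr (u0, b)))
        ((Finset.univ : Finset β).image fun b => Sum.inr (v0, b)) := by
      rw [Finset.disjoint_left]
      rintro x hx1 hx2
      simp only [Finset.mem_union, Finset.mem_image, Finset.mem_univ, true_and] at hx1 hx2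
      obtain ⟨b, hb⟩ := hx2
      rcases hx1 with ⟨a, -, ha⟩ | ⟨b', hb'⟩
      · rw [← hb] at ha
        simp at ha
      · rw [← hb] at hb'
        have h1 : (u0, b') = (v0, b) := Sum.inr_injective hb'
        exact hadj0.ne (congrArg Prod.fst h1)
    have hcardS : S.card = Δij + K + K := by
      rw [hS, Finset.card_union_of_disjoint hd2, Finset.card_union_of_disjoint hd1,
        Finset.card_image_of_injective _ Sum.inl_injective, hcardA]
      have hi1 : Function.Injective (fun b : β => (Sum.inr (u0, b) : V ⊕ V × β)) := by
        intro b b' h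
        simpa using h
      have hi2 : Function.Injective (fun b : β => (Sum.inr (v0, b) : V ⊕ V × β)) := by
        intro b b' h
        simpa using h
      rw [Finset.card_image_of_injective _ hi1, Finset.card_image_of_injective _ hi2]
      simp [hK]
    omega
  -- ========== conclusion ==========
  rw [distChromaticNumber]
  apply le_antisymm
  · exact Nat.sInf_le hmem
  · exact le_csInf ⟨_, hmem⟩ (fun b hb => hlow b hb)
end

section
/- Let H be a graph such that for every locating-dominating set B of minimum cardinality in H there exists a vertex u ∉ B with N(u) ∩ B = B. Then γ_{l-d}(K₁⊙H) = γ_{l-d}(H) + 1. -/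
open SimpleGraph

/-- `D` is a dominating set of `G`: every vertex outside `D` has a neighbor in `D`. -/
def IsDominatingSet {α : Type*} (G : SimpleGraph α) (D : Set α) : Prop :=
  ∀ v ∉ D, ∃ u ∈ D, G.Adj v u

/-- The domination number of `G`. -/
noncomputable def dominationNumber {α : Type*} (G : SimpleGraph α) : ℕ :=
  sInf {n | ∃ D : Set α, IsDominatingSet G D ∧ D.ncard = n}

/-- `D` is a locating-dominating set of `G`: it is dominating and distinct
vertices outside `D` have distinct neighborhoods within `D`. -/
def IsLocatingDominating {α : Type*} (G : SimpleGraph α) (D : Set α) : Prop :=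
  IsDominatingSet G D ∧
    ∀ u ∉ D, ∀ v ∉ D, u ≠ v → {x ∈ D | G.Adj u x} ≠ {x ∈ D | G.Adj v x}

/-- The location-domination number of `G`. -/
noncomputable def locatingDominationNumber {α : Type*} (G : SimpleGraph α) : ℕ :=
  sInf {n | ∃ D : Set α, IsLocatingDominating G D ∧ D.ncard = n}


section LdAux

variable {β : Type*} (H : SimpleGraph β)

private lemma ldaux_univ_ld {α : Type*} (G : SimpleGraph α) :
    IsLocatingDominating G Set.univ :=
  ⟨fun v hv => absurd (Set.mem_univ v) hv,
   fun u hu => absurd (Set.mem_univ u) hu⟩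

private lemma ldaux_exists_min {α : Type*} (G : SimpleGraph α) :
    ∃ D : Set α, IsLocatingDominating G D ∧ D.ncard = locatingDominationNumber G := by
  have hne : {n | ∃ D : Set α, IsLocatingDominating G D ∧ D.ncard = n}.Nonempty :=
    ⟨Set.univ.ncard, Set.univ, ldaux_univ_ld G, rfl⟩
  exact Nat.sInf_mem hne

private lemma ldaux_ldn_le {α : Type*} {G : SimpleGraph α} {D : Set α}
    (h : IsLocatingDominating G D) : locatingDominationNumber G ≤ D.ncard :=
  Nat.sInf_le ⟨D, h, rfl⟩

/-- embedding of `β` into the corona vertex set -/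
private def ldem (b : β) : Fin 1 ⊕ Fin 1 × β := Sum.inr (0, b)

private lemma em_inj : Function.Injective (ldem (β := β)) := by
  intro a b h
  simpa [ldem] using h

private lemma ldaux_adj_em_em (b y : β) :
    (corona (⊥ : SimpleGraph (Fin 1)) H).Adj (ldem b) (ldem y) ↔ H.Adj b y :=
  ⟨fun h => h.2, fun h => ⟨rfl, h⟩⟩

private lemma ldaux_adj_em_inl (b : β) (i : Fin 1) :
    (corona (⊥ : SimpleGraph (Fin 1)) H).Adj (ldem b) (Sum.inl i) :=
  Subsingleton.elim (0 : Fin 1) i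

private lemma ldaux_adj_inl_em (i : Fin 1) (b : β) :
    (corona (⊥ : SimpleGraph (Fin 1)) H).Adj (Sum.inl i) (ldem b) :=
  Subsingleton.elim i (0 : Fin 1)

private lemma ldaux_not_adj_inl_inl (i j : Fin 1) :
    ¬ (corona (⊥ : SimpleGraph (Fin 1)) H).Adj (Sum.inl i) (Sum.inl j) := by
  intro h
  exact (SimpleGraph.bot_adj i j).mp h

private lemma ldaux_nbhd (D : Set (Fin 1 ⊕ Fin 1 × β)) (b : β) :
    {x ∈ D | (corona (⊥ : SimpleGraph (Fin 1)) H).Adj (ldem b) x}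
      = (D ∩ {Sum.inl 0}) ∪ ldem '' {y | ldem y ∈ D ∧ H.Adj b y} := by
  ext x
  rcases x with i | ⟨i, y⟩
  · obtain rfl : i = 0 := Subsingleton.elim i 0
    constructor
    · rintro ⟨hx, -⟩
      exact Or.inl ⟨hx, rfl⟩
    · rintro (⟨hx, -⟩ | ⟨z, -, hz⟩)
      · exact ⟨hx, ldaux_adj_em_inl H b 0⟩
      · exact absurd hz (by simp [ldem])
  · obtain rfl : i = 0 := Subsingleton.elim i 0
    constructor
    · rintro ⟨hx, hadj⟩
      exact Or.inr ⟨y, ⟨hx, ((ldaux_adj_em_em H b y).mp hadj)⟩, rfl⟩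
    · rintro (⟨-, h⟩ | ⟨z, ⟨hz, hadj⟩, hze⟩)
      · exact absurd h (by simp)
      · obtain rfl : z = y := em_inj hze
        exact ⟨hz, (ldaux_adj_em_em H b _).mpr hadj⟩

private lemma ldaux_image_cancel {A : Set (Fin 1 ⊕ Fin 1 × β)}
    (hA : ∀ x ∈ A, x = Sum.inl 0) {S T : Set β}
    (h : A ∪ ldem '' S = A ∪ ldem '' T) : S = T := by
  have key : ∀ S T : Set β, A ∪ ldem '' S = A ∪ ldem '' T → S ⊆ T := by
    intro S T hST y hy
    have hmem : ldem y ∈ A ∪ ldem '' T := hST ▸ Or.inr ⟨y, hy, rfl⟩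
    rcases hmem with hmem | ⟨z, hz, hze⟩
    · exact absurd (hA _ hmem) (by simp [ldem])
    · obtain rfl : z = y := em_inj hze
      exact hz
  exact Set.Subset.antisymm (key S T h) (key T S h.symm)

private lemma ldaux_upper [Fintype β] :
    locatingDominationNumber (corona (⊥ : SimpleGraph (Fin 1)) H)
      ≤ locatingDominationNumber H + 1 := by
  classical
  obtain ⟨B, hBld, hBcard⟩ := ldaux_exists_min H
  set D : Set (Fin 1 ⊕ Fin 1 × β) := insert (Sum.inl 0) (ldem '' B) with hD
  have hmem : ∀ y : β, ldem y ∈ D ↔ y ∈ B := by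
    intro y
    constructor
    · intro hy
      rcases Set.mem_insert_iff.mp hy with h | ⟨z, hz, hze⟩
      · exact absurd h (by simp [ldem])
      · obtain rfl : z = y := em_inj hze
        exact hz
    · intro hy
      exact Set.mem_insert_of_mem _ ⟨y, hy, rfl⟩
  have hld : IsLocatingDominating (corona (⊥ : SimpleGraph (Fin 1)) H) D := by
    constructor
    · rintro (i | ⟨i, b⟩) hv
      · obtain rfl : i = 0 := Subsingleton.elim i 0
        exact absurd (Set.mem_insert _ _) hv
      · obtain rfl : i = 0 := Subsingleton.elim i 0
        exact ⟨Sum.inl 0, Set.mem_insert _ _, ldaux_adj_em_inl H b 0⟩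
    · rintro (i | ⟨i, b⟩) hu (j | ⟨j, b'⟩) hv hne heq
      · obtain rfl : i = 0 := Subsingleton.elim i 0
        exact absurd (Set.mem_insert _ _) hu
      · obtain rfl : i = 0 := Subsingleton.elim i 0
        exact absurd (Set.mem_insert _ _) hu
      · obtain rfl : j = 0 := Subsingleton.elim j 0
        exact absurd (Set.mem_insert _ _) hv
      · obtain rfl : i = 0 := Subsingleton.elim i 0
        obtain rfl : j = 0 := Subsingleton.elim j 0
        have hb : b ∉ B := fun h => hu ((hmem b).mpr h)
        have hb' : b' ∉ B := fun h => hv ((hmem b').mpr h)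
        have hbne : b ≠ b' := fun h => hne (by rw [h])
        refine hBld.2 b hb b' hb' hbne ?_
        have heq' : {x ∈ D | (corona (⊥ : SimpleGraph (Fin 1)) H).Adj (ldem b) x}
            = {x ∈ D | (corona (⊥ : SimpleGraph (Fin 1)) H).Adj (ldem b') x} := heq
        rw [ldaux_nbhd, ldaux_nbhd] at heq'
        have hS : {y | ldem y ∈ D ∧ H.Adj b y} = {y | ldem y ∈ D ∧ H.Adj b' y} :=
          ldaux_image_cancel (fun x hx => hx.2) heq'
        have hS' : {y | y ∈ B ∧ H.Adj b y} = {y | y ∈ B ∧ H.Adj b' y} := by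
          have e1 : {y | ldem y ∈ D ∧ H.Adj b y} = {y | y ∈ B ∧ H.Adj b y} := by
            ext y; rw [Set.mem_setOf_eq, Set.mem_setOf_eq, hmem]
          have e2 : {y | ldem y ∈ D ∧ H.Adj b' y} = {y | y ∈ B ∧ H.Adj b' y} := by
            ext y; rw [Set.mem_setOf_eq, Set.mem_setOf_eq, hmem]
          rw [← e1, ← e2, hS]
        exact hS'
  have hcard : D.ncard = B.ncard + 1 := by
    rw [hD, Set.ncard_insert_of_notMem (by simp [ldem]),
      Set.ncard_image_of_injective _ em_inj]
  calc locatingDominationNumber (corona (⊥ : SimpleGraph (Fin 1)) H)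
      ≤ D.ncard := ldaux_ldn_le hld
    _ = locatingDominationNumber H + 1 := by rw [hcard, hBcard]

end LdAux

/-- Let `H` be a graph such that every locating-dominating set `B` of minimum
cardinality has a vertex `u ∉ B` with `N(u) ∩ B = B`. Then
`γ_{l-d}(K₁ ⊙ H) = γ_{l-d}(H) + 1`. -/
theorem stmt_12 {β : Type*} [Fintype β] (H : SimpleGraph β)
    (hB : ∀ B : Set β, IsLocatingDominating H B → B.ncard = locatingDominationNumber H →
      ∃ u ∉ B, {x ∈ B | H.Adj u x} = B) :
    locatingDominationNumber (corona (⊥ : SimpleGraph (Fin 1)) H)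
      = locatingDominationNumber H + 1 := by
  classical
  have hlow : locatingDominationNumber H + 1
      ≤ locatingDominationNumber (corona (⊥ : SimpleGraph (Fin 1)) H) := by
    by_contra hcon
    push_neg at hcon
    have hle : locatingDominationNumber (corona (⊥ : SimpleGraph (Fin 1)) H)
        ≤ locatingDominationNumber H := by omega
    obtain ⟨D, hDld, hDcard⟩ := ldaux_exists_min (corona (⊥ : SimpleGraph (Fin 1)) H)
    set B : Set β := {b : β | ldem b ∈ D} with hBdef
    have hmemB : ∀ b : β, b ∈ B ↔ ldem b ∈ D := fun b => Iff.rfl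
    have hdist : ∀ b, b ∉ B → ∀ b', b' ∉ B → b ≠ b' →
        {x ∈ B | H.Adj b x} ≠ {x ∈ B | H.Adj b' x} := by
      intro b hb b' hb' hbne heq
      refine hDld.2 (ldem b) (fun h => hb ((hmemB b).mpr h)) (ldem b')
        (fun h => hb' ((hmemB b').mpr h)) (fun h => hbne (em_inj h)) ?_
      rw [ldaux_nbhd, ldaux_nbhd]
      congr 1
      have e1 : {y | ldem y ∈ D ∧ H.Adj b y} = {x ∈ B | H.Adj b x} := rfl
      have e2 : {y | ldem y ∈ D ∧ H.Adj b' y} = {x ∈ B | H.Adj b' x} := rfl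
      rw [e1, e2, heq]
    by_cases hc : (Sum.inl 0 : Fin 1 ⊕ Fin 1 × β) ∈ D
    · -- the apex vertex is in D
      have hDeq : D = insert (Sum.inl 0) (ldem '' B) := by
        ext x
        rcases x with i | ⟨i, y⟩
        · obtain rfl : i = 0 := Subsingleton.elim i 0
          simp [hc]
        · obtain rfl : i = 0 := Subsingleton.elim i 0
          constructor
          · intro hx
            exact Set.mem_insert_of_mem _ ⟨y, hx, rfl⟩
          · intro hx
            rcases Set.mem_insert_iff.mp hx with h | ⟨z, hz, hze⟩
            · exact absurd h (by simp)
            · obtain rfl : z = y := em_inj hze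
              exact hz
      have hcard : D.ncard = B.ncard + 1 := by
        rw [hDeq, Set.ncard_insert_of_notMem (by simp [ldem]),
          Set.ncard_image_of_injective _ em_inj]
      have h1le : B.ncard + 1 ≤ locatingDominationNumber H := by omega
      by_cases hBdom : IsDominatingSet H B
      · have : locatingDominationNumber H ≤ B.ncard := ldaux_ldn_le ⟨hBdom, hdist⟩
        omega
      · obtain ⟨b₀, hb₀B, hb₀⟩ : ∃ b₀, b₀ ∉ B ∧ ∀ u ∈ B, ¬ H.Adj b₀ u := by
          unfold IsDominatingSet at hBdom
          push_neg at hBdom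
          obtain ⟨b₀, h1, h2⟩ := hBdom
          exact ⟨b₀, h1, fun u hu ha => (h2 u hu) ha⟩
        have hb₀empty : {x ∈ B | H.Adj b₀ x} = ∅ := by
          ext y
          simp only [Set.mem_setOf_eq, Set.mem_empty_iff_false, iff_false, not_and]
          exact fun hy ha => hb₀ y hy ha
        have hdom' : ∀ v, v ∉ B → v ≠ b₀ → ∃ u ∈ B, H.Adj v u := by
          intro v hv hvb
          by_contra hno
          push_neg at hno
          refine hdist v hv b₀ hb₀B hvb ?_
          rw [hb₀empty]
          ext y
          simp only [Set.mem_setOf_eq, Set.mem_empty_iff_false, iff_false, not_and]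
          exact fun hy ha => (hno y hy) ha
        have hloc : ∀ a, a ∉ B → ∀ u, u ∉ insert a B → ∀ v, v ∉ insert a B → u ≠ v →
            {x ∈ insert a B | H.Adj u x} ≠ {x ∈ insert a B | H.Adj v x} := by
          intro a ha u hu v hv huv heq
          refine hdist u (fun h => hu (Set.mem_insert_of_mem _ h))
            v (fun h => hv (Set.mem_insert_of_mem _ h)) huv ?_
          ext y
          simp only [Set.mem_setOf_eq]
          constructor
          · rintro ⟨hy, hadj⟩
            have hmem : y ∈ {x ∈ insert a B | H.Adj u x} := ⟨Set.mem_insert_of_mem _ hy, hadj⟩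
            rw [heq] at hmem
            exact ⟨hy, hmem.2⟩
          · rintro ⟨hy, hadj⟩
            have hmem : y ∈ {x ∈ insert a B | H.Adj v x} := ⟨Set.mem_insert_of_mem _ hy, hadj⟩
            rw [← heq] at hmem
            exact ⟨hy, hmem.2⟩
        have hB'ld : IsLocatingDominating H (insert b₀ B) := by
          refine ⟨?_, hloc b₀ hb₀B⟩
          intro v hv
          obtain ⟨u, hu, ha⟩ := hdom' v (fun h => hv (Set.mem_insert_of_mem _ h))
            (fun h => hv (h ▸ Set.mem_insert _ _))
          exact ⟨u, Set.mem_insert_of_mem _ hu, ha⟩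
        have hB'card : (insert b₀ B).ncard = locatingDominationNumber H := by
          have h3 := ldaux_ldn_le hB'ld
          have h2 : (insert b₀ B).ncard = B.ncard + 1 := Set.ncard_insert_of_notMem hb₀B
          omega
        obtain ⟨u, huB', hNu⟩ := hB (insert b₀ B) hB'ld hB'card
        have hadju : ∀ x ∈ insert b₀ B, H.Adj u x := by
          intro x hx
          rw [← hNu] at hx
          exact hx.2
        have huB : u ∉ B := fun h => huB' (Set.mem_insert_of_mem _ h)
        have hB''ld : IsLocatingDominating H (insert u B) := by
          refine ⟨?_, hloc u huB⟩
          intro v hv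
          have hvB : v ∉ B := fun h => hv (Set.mem_insert_of_mem _ h)
          have hvu : v ≠ u := fun h => hv (h ▸ Set.mem_insert _ _)
          by_cases hvb : v = b₀
          · subst hvb
            exact ⟨u, Set.mem_insert _ _, (hadju v (Set.mem_insert _ _)).symm⟩
          · obtain ⟨w, hw, ha⟩ := hdom' v hvB hvb
            exact ⟨w, Set.mem_insert_of_mem _ hw, ha⟩
        have hB''card : (insert u B).ncard = locatingDominationNumber H := by
          have h3 := ldaux_ldn_le hB''ld
          have h2 : (insert u B).ncard = B.ncard + 1 := Set.ncard_insert_of_notMem huB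
          omega
        obtain ⟨w, hwB', hNw⟩ := hB (insert u B) hB''ld hB''card
        have hadjw : ∀ x ∈ insert u B, H.Adj w x := by
          intro x hx
          rw [← hNw] at hx
          exact hx.2
        have hwB : w ∉ B := fun h => hwB' (Set.mem_insert_of_mem _ h)
        have hwu : w ≠ u := fun h => hwB' (h ▸ Set.mem_insert _ _)
        refine hdist u huB w hwB (Ne.symm hwu) ?_
        ext y
        simp only [Set.mem_setOf_eq]
        exact ⟨fun h => ⟨h.1, hadjw y (Set.mem_insert_of_mem _ h.1)⟩,
               fun h => ⟨h.1, hadju y (Set.mem_insert_of_mem _ h.1)⟩⟩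
    · -- the apex vertex is not in D
      have hDeq : D = ldem '' B := by
        ext x
        rcases x with i | ⟨i, y⟩
        · obtain rfl : i = 0 := Subsingleton.elim i 0
          simp only [Set.mem_image]
          constructor
          · intro hx
            exact absurd hx hc
          · rintro ⟨z, hz, hze⟩
            exact absurd hze (by simp [ldem])
        · obtain rfl : i = 0 := Subsingleton.elim i 0
          constructor
          · intro hx
            exact ⟨y, hx, rfl⟩
          · rintro ⟨z, hz, hze⟩
            obtain rfl : z = y := em_inj hze
            exact hz
      have hcard : D.ncard = B.ncard := by
        rw [hDeq, Set.ncard_image_of_injective _ em_inj]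
      have hBld : IsLocatingDominating H B := by
        refine ⟨?_, hdist⟩
        intro v hv
        obtain ⟨d, hd, ha⟩ := hDld.1 (ldem v) (fun h => hv ((hmemB v).mpr h))
        rcases d with i | ⟨i, y⟩
        · obtain rfl : i = 0 := Subsingleton.elim i 0
          exact absurd hd hc
        · obtain rfl : i = 0 := Subsingleton.elim i 0
          exact ⟨y, hd, (ldaux_adj_em_em H v y).mp ha⟩
      have hBcard : B.ncard = locatingDominationNumber H := by
        have h3 := ldaux_ldn_le hBld
        omega
      obtain ⟨u, huB, hNu⟩ := hB B hBld hBcard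
      have h1 : {x ∈ D | (corona (⊥ : SimpleGraph (Fin 1)) H).Adj (ldem u) x} = D := by
        rw [ldaux_nbhd]
        have hA : D ∩ {(Sum.inl 0 : Fin 1 ⊕ Fin 1 × β)} = ∅ := by
          ext x
          simp only [Set.mem_inter_iff, Set.mem_singleton_iff,
            Set.mem_empty_iff_false, iff_false, not_and]
          rintro hx rfl
          exact hc hx
        rw [hA, Set.empty_union]
        have hS : {y | ldem y ∈ D ∧ H.Adj u y} = B := hNu
        rw [hS, ← hDeq]
      have h2 : {x ∈ D | (corona (⊥ : SimpleGraph (Fin 1)) H).Adj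
          (Sum.inl (0 : Fin 1)) x} = D := by
        ext x
        rcases x with i | ⟨i, y⟩
        · obtain rfl : i = 0 := Subsingleton.elim i 0
          exact ⟨fun h => h.1, fun h => absurd h hc⟩
        · obtain rfl : i = 0 := Subsingleton.elim i 0
          exact ⟨fun h => h.1, fun h => ⟨h, ldaux_adj_inl_em H 0 y⟩⟩
      exact hDld.2 (ldem u) (fun h => huB ((hmemB u).mpr h)) (Sum.inl 0) hc
        (by simp [ldem]) (h1.trans h2.symm)
  exact le_antisymm (ldaux_upper H) hlow
end
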